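/- Let u: R → U be a flat ring epimorphism of commutative rings with kernel I, and let G_u = {J : JU = U} be the associated Gabriel topology. Then every G_u-divisible R-module is annihilated by I. -/

import Mathlib

universe u v

/-- if `u : R → U` is a flat ring epimorphism of commutative rings with
kernel `I`, then every `𝒢ᵤ`-divisible `R`-module `M` (i.e. `JM = M` whenever `JU = U`)
is annihilated by `I`. -/
theorem stmt19 {R : Type u} [CommRing R] {U : Type v} [CommRing U] [Algebra R U]
    [Module.Flat R U]
    (hepi : Function.Bijective (LinearMap.mul' R U))
    {M : Type*} [AddCommGroup M] [Module R M]
    (hdiv : ∀ J : Ideal R, J • (⊤ : Submodule R U) = ⊤ → J • (⊤ : Submodule R M) = ⊤) :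
    ∀ r ∈ RingHom.ker (algebraMap R U), ∀ m : M, r • m = 0 := by
  intro r hr m
  -- the annihilator ideal of `r`
  set g : R →ₗ[R] R := LinearMap.lsmul R R r with hg
  set J : Ideal R := LinearMap.ker g with hJ
  -- Step 1 : `J • ⊤ = ⊤` in `U`.
  have hJU : J • (⊤ : Submodule R U) = ⊤ := by
    rw [eq_top_iff]
    intro x _
    -- show `x ∈ J • ⊤` for all `x`; it suffices for `x = 1`? No: `J • ⊤` is an `R`-submodule,
    -- not a `U`-submodule. Instead we show every `x` directly.
    -- tensor the exact sequence `J → R → R` (last map `·r`) with `U`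
    have hex := Module.Flat.lTensor_exact U (LinearMap.exact_subtype_ker_map g)
    have hx : (LinearMap.lTensor U g) (x ⊗ₜ[R] (1 : R)) = 0 := by
      have : (LinearMap.lTensor U g) (x ⊗ₜ[R] (1 : R)) = x ⊗ₜ[R] r := by
        simp [hg, LinearMap.lTensor_tmul]
      rw [this]
      have : (TensorProduct.rid R U) (x ⊗ₜ[R] r) = 0 := by
        rw [TensorProduct.rid_tmul]
        rw [Algebra.smul_def, RingHom.mem_ker.mp hr, zero_mul]
      exact (TensorProduct.rid R U).injective (by simpa using this)
    obtain ⟨t, ht⟩ := (hex _).mp hx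
    -- map `U ⊗ J → U`, `u ⊗ j ↦ j • u`, lands in `J • ⊤`
    have key : ∀ s : TensorProduct R U J,
        (TensorProduct.rid R U) ((LinearMap.lTensor U J.subtype) s) ∈ J • (⊤ : Submodule R U) := by
      intro s
      induction s using TensorProduct.induction_on with
    | zero => simp
    | tmul u j =>
        simp only [LinearMap.lTensor_tmul, Submodule.coe_subtype, TensorProduct.rid_tmul]
        exact Submodule.smul_mem_smul j.2 trivial
    | add a b ha hb =>
        simp only [map_add]
        exact Submodule.add_mem _ ha hb
    have : x = (TensorProduct.rid R U) ((LinearMap.lTensor U J.subtype) t) := by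
      rw [ht]; simp [TensorProduct.rid_tmul]
    rw [this]
    exact key t
  -- Step 2 : conclude in `M`.
  have hm : m ∈ J • (⊤ : Submodule R M) := by rw [hdiv J hJU]; trivial
  refine Submodule.smul_induction_on hm ?_ ?_
  · intro j hj n _
    rw [smul_smul, mul_comm]
    have : r * j = 0 := by simpa [hJ, hg, smul_eq_mul] using hj
    rw [mul_comm] at this
    rw [this, zero_smul]
  · intro a b ha hb
    rw [smul_add, ha, hb, add_zero]
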